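/- Suppose the target model factors through the protected variable: f_tar = h ∘ f_aux for some differentiable h : ℝᵖ → ℝ, with ∇f_aux(x₀) = A of full row rank. Then ∇f_tar(x₀)ᵀ A⁺ = ∇h(f_aux(x₀))ᵀ; i.e., the fAux statistic exactly recovers the sensitivity of the model to the (predicted) protected variable. -/
import Mathlib


open Matrix

/-- If the target model factors through the protected variable,
`f_tar = h ∘ f_aux`, then the fAux statistic `∇f_tarᵀ A⁺` exactly recovers the
sensitivity `∇h` of the model to the (predicted) protected variable. -/
theorem faux_recovers_protected_sensitivity
    {n p : ℕ}
    (f_aux : (Fin n → ℝ) → (Fin p → ℝ))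
    (h : (Fin p → ℝ) → ℝ)
    (x₀ : Fin n → ℝ)
    (haux : DifferentiableAt ℝ f_aux x₀)
    (hh : DifferentiableAt ℝ h (f_aux x₀))
    (A : Matrix (Fin p) (Fin n) ℝ)
    (hA : ∀ i j, A i j = fderiv ℝ f_aux x₀ (Pi.single j 1) i)
    [Invertible (A * Aᵀ)] :
    (fun j => fderiv ℝ (h ∘ f_aux) x₀ (Pi.single j 1)) ᵥ* (Aᵀ * (A * Aᵀ)⁻¹) =
      fun i => fderiv ℝ h (f_aux x₀) (Pi.single i 1) := by
  have hcomp : fderiv ℝ (h ∘ f_aux) x₀ =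
      (fderiv ℝ h (f_aux x₀)).comp (fderiv ℝ f_aux x₀) := fderiv_comp x₀ hh haux
  set L := fderiv ℝ h (f_aux x₀) with hLdef
  set g : Fin p → ℝ := fun i => L (Pi.single i 1) with hg
  have hL : ∀ w : Fin p → ℝ, L w = ∑ i, w i * g i := by
    intro w
    have := LinearMap.pi_apply_eq_sum_univ (L : (Fin p → ℝ) →ₗ[ℝ] ℝ) w
    simp only [smul_eq_mul] at this
    have : ∀ i : Fin p, (Pi.single i 1 : Fin p → ℝ) = fun j => if i = j then 1 else 0 := by
      intro i; funext j; simp [Pi.single_apply, eq_comm]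
    simp only [hg, this]
    assumption
  have key : (fun j => fderiv ℝ (h ∘ f_aux) x₀ (Pi.single j 1)) = g ᵥ* A := by
    funext j
    rw [hcomp]
    simp only [ContinuousLinearMap.comp_apply]
    rw [hL]
    simp [Matrix.vecMul, dotProduct, hA, mul_comm]
  rw [key, Matrix.vecMul_vecMul, ← Matrix.mul_assoc,
    Matrix.mul_inv_of_invertible, Matrix.vecMul_one]
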